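/- Let τ ∈ ℂ with Im τ > 0 and let S ⊆ ℝ be a Borel set. Then the two-dimensional Lebesgue measure of the set {(a, b) ∈ ℝ² : b > 0, |a + bτ|² ≤ Im τ, −a/b ∈ S} equals (1/2)·∫_S Im τ / |τ − t|² dt. -/

import Mathlib

open MeasureTheory Set

/-- The Lebesgue measure of the part of the extremal-length unit ball at `τ` lying over a
Borel set `S` of boundary directions equals `(1/2)·∫_S Im τ/|τ − t|² dt`: the normalized
Thurston measure of the cone over `S` is the harmonic measure of `S` at `τ`. -/
theorem stmt7 (τ : ℂ) (hτ : 0 < τ.im) (S : Set ℝ) (hS : MeasurableSet S) :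
    (volume {p : ℝ × ℝ | 0 < p.2 ∧
        (‖(p.1 : ℂ) + (p.2 : ℂ) * τ‖) ^ 2 ≤ τ.im ∧ -p.1 / p.2 ∈ S}).toReal
      = (1 / 2) * ∫ t in S, τ.im / (‖τ - (t : ℂ)‖) ^ 2 := by
  have hcpos : ∀ t : ℝ, 0 < ‖τ - (t : ℂ)‖ := by
    intro t
    refine norm_pos_iff.2 fun h => ?_
    have : (τ - (t : ℂ)).im = 0 := by rw [h]; simp
    simp [Complex.sub_im, Complex.ofReal_im] at this
    exact hτ.ne' this
  have hccont : Continuous fun t : ℝ => ‖τ - (t : ℂ)‖ :=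
    continuous_norm.comp (continuous_const.sub Complex.continuous_ofReal)
  set A : Set (ℝ × ℝ) := {p : ℝ × ℝ | 0 < p.2 ∧
      (‖(p.1 : ℂ) + (p.2 : ℂ) * τ‖) ^ 2 ≤ τ.im ∧ -p.1 / p.2 ∈ S} with hAdef
  have hA : MeasurableSet A := by
    have h1 : MeasurableSet {p : ℝ × ℝ | 0 < p.2} :=
      measurableSet_lt measurable_const measurable_snd
    have h2 : MeasurableSet {p : ℝ × ℝ |
        (‖(p.1 : ℂ) + (p.2 : ℂ) * τ‖) ^ 2 ≤ τ.im} :=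
      measurableSet_le ((continuous_norm.comp
        ((Complex.continuous_ofReal.comp continuous_fst).add
          ((Complex.continuous_ofReal.comp continuous_snd).mul
            continuous_const))).pow 2).measurable measurable_const
    have h3 : MeasurableSet {p : ℝ × ℝ | -p.1 / p.2 ∈ S} :=
      (measurable_fst.neg.div measurable_snd) hS
    simpa only [hAdef, Set.setOf_and] using h1.inter (h2.inter h3)
  -- the sets of admissible directions for given b, and admissible b for given t
  set U : ℝ → Set ℝ := fun b => {t : ℝ | (b * ‖τ - (t : ℂ)‖) ^ 2 ≤ τ.im} with hUdef
  have hU : ∀ b, MeasurableSet (U b) := fun b =>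
    measurableSet_le (((continuous_const.mul hccont).pow 2).measurable) measurable_const
  set F : ℝ × ℝ → ENNReal := fun p =>
    Set.indicator {q : ℝ × ℝ | (q.1 * ‖τ - (q.2 : ℂ)‖) ^ 2 ≤ τ.im}
      (fun q => ENNReal.ofReal q.1) p with hFdef
  have hFmeas : Measurable F := by
    refine Measurable.indicator (ENNReal.measurable_ofReal.comp measurable_fst) ?_
    exact measurableSet_le (((continuous_fst.mul
      (hccont.comp continuous_snd)).pow 2).measurable) measurable_const
  -- Step 1: slice along b
  have step1 : volume A = ∫⁻ b in Ioi (0 : ℝ), ∫⁻ t in S, F (b, t) := by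
    rw [Measure.volume_eq_prod, Measure.prod_apply_symm hA]
    have key : ∀ b : ℝ, volume ((fun a => (a, b)) ⁻¹' A)
        = (Ioi (0 : ℝ)).indicator (fun b => ∫⁻ t in S, F (b, t)) b := by
      intro b
      by_cases hb : 0 < b
      · have hbne : b ≠ 0 := hb.ne'
        have hpre : (fun a => (a, b)) ⁻¹' A = (((-b)⁻¹) * ·) ⁻¹' (U b ∩ S) := by
          ext a
          have ht : (-b)⁻¹ * a = -a / b := by
            rw [inv_neg, neg_mul, neg_div, mul_comm, ← div_eq_mul_inv]
          have habs : b * ‖τ - ((-a / b : ℝ) : ℂ)‖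
              = ‖(a : ℂ) + (b : ℂ) * τ‖ := by
            have h2 : ((a : ℂ) + (b : ℂ) * τ) = (b : ℂ) * (τ - ((-a / b : ℝ) : ℂ)) := by
              have hbC : (b : ℂ) ≠ 0 := Complex.ofReal_ne_zero.2 hbne
              push_cast
              field_simp
              ring
            rw [h2, norm_mul, Complex.norm_real, Real.norm_eq_abs, abs_of_pos hb]
          simp only [mem_preimage, hAdef, mem_setOf_eq, mem_inter_iff, hUdef, ht, habs, hb,
            true_and]
        rw [hpre, Real.volume_preimage_mul_left (inv_ne_zero (neg_ne_zero.2 hbne)),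
          Set.indicator_of_mem (mem_Ioi.2 hb)]
        have habs2 : |((-b)⁻¹)⁻¹| = b := by
          rw [inv_inv, abs_neg, abs_of_pos hb]
        rw [habs2]
        -- compute the inner lintegral
        have hFind : ∀ t : ℝ, F (b, t) = (U b).indicator (fun _ => ENNReal.ofReal b) t := by
          intro t
          simp only [hFdef, hUdef, Set.indicator_apply, mem_setOf_eq]
        calc ENNReal.ofReal b * volume (U b ∩ S)
            = ENNReal.ofReal b * (volume.restrict S) (U b) := by
              rw [Measure.restrict_apply (hU b)]
          _ = ∫⁻ t in S, (U b).indicator (fun _ => ENNReal.ofReal b) t := by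
              rw [lintegral_indicator (hU b), setLIntegral_const]
          _ = ∫⁻ t in S, F (b, t) := by
              refine lintegral_congr fun t => (hFind t).symm
      · have : (fun a => (a, b)) ⁻¹' A = ∅ := by
          ext a; simp [hAdef, hb]
        rw [this, Set.indicator_of_notMem (by simpa using hb)]
        simp
    simp_rw [key]
    rw [lintegral_indicator measurableSet_Ioi]
  -- Step 2: swap the order of integration
  have step2 : (∫⁻ b in Ioi (0 : ℝ), ∫⁻ t in S, F (b, t))
      = ∫⁻ t in S, ∫⁻ b in Ioi (0 : ℝ), F (b, t) := by
    exact lintegral_lintegral_swap hFmeas.aemeasurable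
  -- Step 3: compute the inner integral over b
  have step3 : ∀ t : ℝ, (∫⁻ b in Ioi (0 : ℝ), F (b, t))
      = ENNReal.ofReal ((1 / 2) * (τ.im / (‖τ - (t : ℂ)‖) ^ 2)) := by
    intro t
    set ct : ℝ := ‖τ - (t : ℂ)‖ with hct
    have hctpos : 0 < ct := hcpos t
    set r : ℝ := Real.sqrt τ.im / ct with hr
    have hsq : Real.sqrt τ.im ^ 2 = τ.im := Real.sq_sqrt hτ.le
    have hrpos : 0 ≤ r := div_nonneg (Real.sqrt_nonneg _) hctpos.le
    have hV : MeasurableSet {b : ℝ | (b * ct) ^ 2 ≤ τ.im} :=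
      measurableSet_le (((continuous_id.mul continuous_const).pow 2).measurable)
        measurable_const
    have hFind : ∀ b : ℝ, F (b, t)
        = Set.indicator {b : ℝ | (b * ct) ^ 2 ≤ τ.im} (fun b => ENNReal.ofReal b) b := by
      intro b
      simp only [hFdef, Set.indicator_apply, mem_setOf_eq, hct]
    have hseteq : {b : ℝ | (b * ct) ^ 2 ≤ τ.im} ∩ Ioi (0 : ℝ) = Ioc 0 r := by
      ext b
      simp only [mem_inter_iff, mem_setOf_eq, mem_Ioi, mem_Ioc, hr]
      constructor
      · rintro ⟨h1, h2⟩
        refine ⟨h2, ?_⟩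
        rw [le_div_iff₀ hctpos]
        nlinarith [Real.sqrt_nonneg τ.im, mul_pos h2 hctpos]
      · rintro ⟨h1, h2⟩
        rw [le_div_iff₀ hctpos] at h2
        refine ⟨?_, h1⟩
        nlinarith [Real.sqrt_nonneg τ.im, mul_pos h1 hctpos]
    calc (∫⁻ b in Ioi (0 : ℝ), F (b, t))
        = ∫⁻ b in Ioi (0 : ℝ),
            Set.indicator {b : ℝ | (b * ct) ^ 2 ≤ τ.im} (fun b => ENNReal.ofReal b) b := by
          exact lintegral_congr fun b => hFind b
      _ = ∫⁻ b in Ioc (0 : ℝ) r, ENNReal.ofReal b := by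
          rw [lintegral_indicator hV, Measure.restrict_restrict hV, hseteq]
      _ = ENNReal.ofReal (∫ b in Ioc (0 : ℝ) r, b) := by
          rw [ofReal_integral_eq_lintegral_ofReal]
          · exact Continuous.integrableOn_Ioc (continuous_id : Continuous fun x : ℝ => x)
          · filter_upwards [ae_restrict_mem measurableSet_Ioc] with x hx
            exact hx.1.le
      _ = ENNReal.ofReal ((1 / 2) * (τ.im / ct ^ 2)) := by
          rw [← intervalIntegral.integral_of_le hrpos, integral_id]
          congr 1
          rw [hr, div_pow, hsq]
          ring
  -- Step 4: convert to a Bochner integral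
  rw [step1, step2]
  have hcont : Continuous fun t : ℝ => (1 / 2) * (τ.im / (‖τ - (t : ℂ)‖) ^ 2) :=
    continuous_const.mul (continuous_const.div (hccont.pow 2)
      fun t => pow_ne_zero 2 (hcpos t).ne')
  have hint : ∫ t in S, (1 / 2) * (τ.im / (‖τ - (t : ℂ)‖) ^ 2)
      = (∫⁻ t in S, ENNReal.ofReal
          ((1 / 2) * (τ.im / (‖τ - (t : ℂ)‖) ^ 2))).toReal := by
    refine integral_eq_lintegral_of_nonneg_ae ?_ hcont.aestronglyMeasurable.restrict
    refine ae_of_all _ fun t => ?_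
    positivity
  calc (∫⁻ t in S, ∫⁻ b in Ioi (0 : ℝ), F (b, t)).toReal
      = (∫⁻ t in S, ENNReal.ofReal
          ((1 / 2) * (τ.im / (‖τ - (t : ℂ)‖) ^ 2))).toReal := by
        congr 1
        exact lintegral_congr fun t => step3 t
    _ = ∫ t in S, (1 / 2) * (τ.im / (‖τ - (t : ℂ)‖) ^ 2) := hint.symm
    _ = (1 / 2) * ∫ t in S, τ.im / (‖τ - (t : ℂ)‖) ^ 2 := integral_const_mul _ _
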